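/- Let P be a finite patchwork on a set Ω and let A be a nonempty subset of Ω. Then A ∈ P if and only if A can be written as the union of a family F of autonomous members of P whose adjacency graph (the simple graph on F with an edge between two distinct members exactly when they are adjacent) is connected. -/

import Mathlib

/-- A subset `A` is convex with respect to an order relation `le` if whenever
`p ≤ q ≤ r` with `p ∈ A` and `r ∈ A`, also `q ∈ A`. -/
def IsConvex {Ω : Type*} (le : Ω → Ω → Prop) (A : Set Ω) : Prop :=
  ∀ p q r : Ω, le p q → le q r → p ∈ A → r ∈ A → q ∈ A

/-- Two subsets overlap if they have nonempty intersection and neither contains the other. -/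
def Overlap {Ω : Type*} (A B : Set Ω) : Prop :=
  (A ∩ B).Nonempty ∧ ¬ A ⊆ B ∧ ¬ B ⊆ A

/-- A patchwork on `Ω` is a set of subsets of `Ω` containing `∅` and `Ω` and closed under
intersection, union and difference of overlapping pairs. -/
def IsPatchwork {Ω : Type*} (P : Set (Set Ω)) : Prop :=
  ∅ ∈ P ∧ Set.univ ∈ P ∧
    ∀ A ∈ P, ∀ B ∈ P, Overlap A B → A ∩ B ∈ P ∧ A ∪ B ∈ P ∧ A \ B ∈ P

/-- A member of a patchwork is autonomous if it is nonempty and overlaps no member. -/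
def Autonomous {Ω : Type*} (P : Set (Set Ω)) (A : Set Ω) : Prop :=
  A ∈ P ∧ A.Nonempty ∧ ∀ B ∈ P, ¬ Overlap A B

/-- The cohort under `B`: the maximal autonomous proper subsets of `B`. -/
def Cohort {Ω : Type*} (P : Set (Set Ω)) (B : Set Ω) : Set (Set Ω) :=
  {A | Autonomous P A ∧ A ⊂ B ∧ ∀ C, Autonomous P C → C ⊂ B → A ⊆ C → A = C}

/-- Two members of a patchwork are adjacent if they are disjoint and their union is a member. -/
def Adjacent {Ω : Type*} (P : Set (Set Ω)) (A B : Set Ω) : Prop :=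
  Disjoint A B ∧ A ∪ B ∈ P

/-- The smallest patchwork on `Ω` containing `C`. -/
def patchworkClosure {Ω : Type*} (C : Set (Set Ω)) : Set (Set Ω) :=
  ⋂₀ {P | IsPatchwork P ∧ C ⊆ P}

/-- The adjacency graph of a family `F` of subsets: vertices are members of `F`, with an
edge between two distinct members exactly when they are disjoint and their union lies in `P`. -/
def adjGraph {Ω : Type*} (P : Set (Set Ω)) (F : Set (Set Ω)) : SimpleGraph F where
  Adj A B := A ≠ B ∧ Adjacent P (A : Set Ω) (B : Set Ω)
  symm := ⟨by
    rintro A B ⟨hne, hdisj, hun⟩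
    exact ⟨hne.symm, hdisj.symm, by rwa [Set.union_comm]⟩⟩
  loopless := ⟨fun A h => h.1 rfl⟩


namespace Statement9Aux

variable {Ω : Type*} {P : Set (Set Ω)}

lemma exists_overlap {A : Set Ω} (hA : A ∈ P) (hAne : A.Nonempty)
    (h : ¬ Autonomous P A) : ∃ B ∈ P, Overlap A B := by
  by_contra hc
  push_neg at hc
  exact h ⟨hA, hAne, fun B hB => hc B hB⟩

/-- measure: number of members of `P` below `A`. -/
noncomputable def mP (P : Set (Set Ω)) (A : Set Ω) : ℕ := {B | B ∈ P ∧ B ⊆ A}.ncard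

lemma mP_lt (hfin : P.Finite) {A A' : Set Ω} (hA : A ∈ P) (hss : A' ⊂ A) :
    mP P A' < mP P A := by
  apply Set.ncard_lt_ncard
  · constructor
    · exact fun B hB => ⟨hB.1, hB.2.trans hss.subset⟩
    · intro hcon
      exact hss.ne (subset_antisymm hss.subset ((hcon ⟨hA, subset_rfl⟩).2))
  · exact hfin.subset (fun B hB => hB.1)

/-- Shrinking lemma: if `X, Y ∈ P` are disjoint nonempty with `X ∪ Y ∈ P`, then there is
an autonomous `C ⊆ X` with `C ∪ Y ∈ P`. -/
lemma shrink (hP : IsPatchwork P) (hfin : P.Finite) :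
    ∀ n : ℕ, ∀ X Y : Set Ω, X ∈ P → Y ∈ P → X.Nonempty → Y.Nonempty →
      Disjoint X Y → X ∪ Y ∈ P → mP P X ≤ n →
      ∃ C, Autonomous P C ∧ C ⊆ X ∧ C ∪ Y ∈ P := by
  intro n
  induction n using Nat.strong_induction_on with
  | _ n ih =>
  intro X Y hX hY hXne hYne hdisj hXY hn
  by_cases hauto : Autonomous P X
  · exact ⟨X, hauto, subset_rfl, hXY⟩
  obtain ⟨Z, hZ, hov⟩ := exists_overlap hX hXne hauto
  obtain ⟨hXZne, hXsZ, hZsX⟩ := hov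
  have hdisjXY := Set.disjoint_left.mp hdisj
  -- It suffices to produce X' ∈ P, nonempty, X' ⊂ X, with X' ∪ Y ∈ P, and recurse.
  suffices hs : ∃ X', X' ∈ P ∧ X'.Nonempty ∧ X' ⊂ X ∧ X' ∪ Y ∈ P by
    obtain ⟨X', hX'P, hX'ne, hX'ss, hX'Y⟩ := hs
    have hm : mP P X' < n := lt_of_lt_of_le (mP_lt hfin hX hX'ss) hn
    obtain ⟨C, hC1, hC2, hC3⟩ := ih (mP P X') hm X' Y hX'P hY hX'ne hYne
      (hdisj.mono_left hX'ss.subset) hX'Y le_rfl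
    exact ⟨C, hC1, hC2.trans hX'ss.subset, hC3⟩
  -- main construction, for any Z₀ overlapping X and containing Y
  have main : ∀ Z₀ : Set Ω, Z₀ ∈ P → Overlap X Z₀ → Y ⊆ Z₀ →
      ∃ X', X' ∈ P ∧ X'.Nonempty ∧ X' ⊂ X ∧ X' ∪ Y ∈ P := by
    intro Z₀ hZ₀ ⟨hne₀, hXs₀, h₀sX⟩ hYZ₀
    have hXiZ : X ∩ Z₀ ∈ P := (hP.2.2 X hX Z₀ hZ₀ ⟨hne₀, hXs₀, h₀sX⟩).1
    have hssub : X ∩ Z₀ ⊂ X :=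
      ⟨Set.inter_subset_left, fun hcon => hXs₀ (fun x hx => (hcon hx).2)⟩
    by_cases hZW : Z₀ ⊆ X ∪ Y
    · refine ⟨X ∩ Z₀, hXiZ, hne₀, hssub, ?_⟩
      have heq : (X ∩ Z₀) ∪ Y = Z₀ := by
        apply subset_antisymm
        · exact Set.union_subset Set.inter_subset_right hYZ₀
        · intro x hx
          rcases hZW hx with hx1 | hx2
          · exact Or.inl ⟨hx1, hx⟩
          · exact Or.inr hx2
      rw [heq]; exact hZ₀
    · have hWZ : Overlap (X ∪ Y) Z₀ := by
        refine ⟨hne₀.mono (Set.inter_subset_inter_left _ Set.subset_union_left), ?_, hZW⟩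
        intro hcon; exact hXs₀ (fun x hx => hcon (Or.inl hx))
      have hWiZ : (X ∪ Y) ∩ Z₀ ∈ P := (hP.2.2 _ hXY Z₀ hZ₀ hWZ).1
      refine ⟨X ∩ Z₀, hXiZ, hne₀, hssub, ?_⟩
      have heq : (X ∩ Z₀) ∪ Y = (X ∪ Y) ∩ Z₀ := by
        ext x
        constructor
        · rintro (⟨h1, h2⟩ | h)
          · exact ⟨Or.inl h1, h2⟩
          · exact ⟨Or.inr h, hYZ₀ h⟩
        · rintro ⟨h1 | h1, h2⟩
          · exact Or.inl ⟨h1, h2⟩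
          · exact Or.inr h1
      rw [heq]; exact hWiZ
  by_cases hYZ : Y ⊆ Z
  · exact main Z hZ ⟨hXZne, hXsZ, hZsX⟩ hYZ
  by_cases hYZd : Disjoint Y Z
  · -- X' = X \ Z
    have hdisjYZ := Set.disjoint_right.mp hYZd
    have hdisjYZ' := Set.disjoint_left.mp hYZd
    have hXdZ : X \ Z ∈ P := (hP.2.2 X hX Z hZ ⟨hXZne, hXsZ, hZsX⟩).2.2
    have hWZ : Overlap (X ∪ Y) Z := by
      refine ⟨hXZne.mono (Set.inter_subset_inter_left _ Set.subset_union_left), ?_, ?_⟩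
      · intro hcon; exact hXsZ (fun x hx => hcon (Or.inl hx))
      · intro hcon
        apply hZsX
        intro x hx
        rcases hcon hx with h1 | h2
        · exact h1
        · exact absurd h2 (hdisjYZ hx)
    have hWdZ : (X ∪ Y) \ Z ∈ P := (hP.2.2 _ hXY Z hZ hWZ).2.2
    have hXdZne : (X \ Z).Nonempty := Set.diff_nonempty.mpr hXsZ
    refine ⟨X \ Z, hXdZ, hXdZne, ⟨Set.diff_subset, ?_⟩, ?_⟩
    · intro hcon
      obtain ⟨x, hx⟩ := hXZne
      exact (hcon hx.1).2 hx.2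
    · have heq : (X \ Z) ∪ Y = (X ∪ Y) \ Z := by
        ext x
        constructor
        · rintro (⟨h1, h2⟩ | h)
          · exact ⟨Or.inl h1, h2⟩
          · exact ⟨Or.inr h, hdisjYZ' h⟩
        · rintro ⟨h1 | h1, h2⟩
          · exact Or.inl ⟨h1, h2⟩
          · exact Or.inr h1
      rw [heq]; exact hWdZ
  · -- Y overlaps Z; use Z' = Y ∪ Z
    have hYZne : (Y ∩ Z).Nonempty := Set.not_disjoint_iff_nonempty_inter.mp hYZd
    have hZsY : ¬ Z ⊆ Y := by
      intro hcon
      obtain ⟨x, hx⟩ := hXZne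
      exact hdisjXY hx.1 (hcon hx.2)
    have hYuZ : Y ∪ Z ∈ P := (hP.2.2 Y hY Z hZ ⟨hYZne, hYZ, hZsY⟩).2.1
    refine main (Y ∪ Z) hYuZ ⟨?_, ?_, ?_⟩ Set.subset_union_left
    · exact hXZne.mono (Set.inter_subset_inter_right _ Set.subset_union_right)
    · intro hcon
      apply hXsZ
      intro x hx
      rcases hcon hx with h1 | h2
      · exact absurd h1 (hdisjXY hx)
      · exact h2
    · intro hcon
      obtain ⟨y, hy⟩ := hYne
      exact hdisjXY (hcon (Or.inl hy)) hy



lemma auton_cases {C B : Set Ω} (hC : Autonomous P C) (hB : B ∈ P)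
    (hint : (C ∩ B).Nonempty) : C ⊆ B ∨ B ⊆ C := by
  by_contra h
  push_neg at h
  exact hC.2.2 B hB ⟨hint, h.1, h.2⟩

lemma reach_mono {F G : Set (Set Ω)} (hFG : F ⊆ G) {u v : Set Ω} (hu : u ∈ F) (hv : v ∈ F)
    (h : (adjGraph P F).Reachable ⟨u, hu⟩ ⟨v, hv⟩) :
    (adjGraph P G).Reachable ⟨u, hFG hu⟩ ⟨v, hFG hv⟩ := by
  let f : adjGraph P F →g adjGraph P G :=
    { toFun := fun x => ⟨x.1, hFG x.2⟩
      map_rel' := by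
        rintro x y ⟨hne, hadj⟩
        refine ⟨?_, hadj⟩
        intro hxy
        simp only [Subtype.mk.injEq] at hxy
        exact hne (Subtype.ext hxy) }
  exact h.map f

lemma connected_single (A : Set Ω) : (adjGraph P {A}).Connected := by
  rw [SimpleGraph.connected_iff]
  refine ⟨?_, ⟨⟨A, rfl⟩⟩⟩
  intro u v
  have : u = v := Subtype.ext (u.2.trans v.2.symm)
  rw [this]

lemma connected_insert {F : Set (Set Ω)} {C D : Set Ω} (hconn : (adjGraph P F).Connected)
    (hD : D ∈ F) (hCD : C ≠ D) (hadj : Adjacent P C D) :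
    (adjGraph P (insert C F)).Connected := by
  rw [SimpleGraph.connected_iff]
  have hDm : D ∈ insert C F := Set.mem_insert_of_mem _ hD
  refine ⟨?_, ⟨⟨D, hDm⟩⟩⟩
  have key : ∀ v : ↥(insert C F), (adjGraph P (insert C F)).Reachable v ⟨D, hDm⟩ := by
    rintro ⟨v, hv⟩
    rcases Set.mem_insert_iff.mp hv with rfl | hv'
    · exact SimpleGraph.Adj.reachable ⟨fun hc => hCD (congrArg Subtype.val hc), hadj⟩
    · exact reach_mono (Set.subset_insert C F) hv' hD (hconn.preconnected ⟨v, hv'⟩ ⟨D, hD⟩)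
  intro u v
  exact (key u).trans (key v).symm

lemma connected_union {F₁ F₂ : Set (Set Ω)} {D₁ D₂ : Set Ω}
    (h1 : (adjGraph P F₁).Connected) (h2 : (adjGraph P F₂).Connected)
    (hD₁ : D₁ ∈ F₁) (hD₂ : D₂ ∈ F₂) (hne : D₁ ≠ D₂) (hadj : Adjacent P D₁ D₂) :
    (adjGraph P (F₁ ∪ F₂)).Connected := by
  rw [SimpleGraph.connected_iff]
  have hD₁m : D₁ ∈ F₁ ∪ F₂ := Or.inl hD₁
  have hD₂m : D₂ ∈ F₁ ∪ F₂ := Or.inr hD₂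
  refine ⟨?_, ⟨⟨D₁, hD₁m⟩⟩⟩
  have edge : (adjGraph P (F₁ ∪ F₂)).Adj ⟨D₂, hD₂m⟩ ⟨D₁, hD₁m⟩ :=
    ⟨fun hc => hne (congrArg Subtype.val hc).symm,
     hadj.1.symm, by rw [Set.union_comm]; exact hadj.2⟩
  have key : ∀ v : ↥(F₁ ∪ F₂), (adjGraph P (F₁ ∪ F₂)).Reachable v ⟨D₁, hD₁m⟩ := by
    rintro ⟨v, hv⟩
    rcases hv with hv' | hv'
    · exact reach_mono Set.subset_union_left hv' hD₁ (h1.preconnected ⟨v, hv'⟩ ⟨D₁, hD₁⟩)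
    · exact (reach_mono Set.subset_union_right hv' hD₂
        (h2.preconnected ⟨v, hv'⟩ ⟨D₂, hD₂⟩)).trans edge.reachable
  intro u v
  exact (key u).trans (key v).symm

/-- Anchored decomposition. -/
lemma decomp_anchored (hP : IsPatchwork P) (hfin : P.Finite) :
    ∀ n : ℕ, ∀ A X : Set Ω, A ∈ P → A.Nonempty → Autonomous P X → Disjoint X A →
      (∃ C0, Autonomous P C0 ∧ C0 ⊆ A ∧ X ∪ C0 ∈ P) → mP P A ≤ n →
      ∃ F : Set (Set Ω), (∀ C ∈ F, Autonomous P C) ∧ ⋃₀ F = A ∧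
        (adjGraph P F).Connected ∧ ∃ D ∈ F, X ∪ D ∈ P := by
  intro n
  induction n using Nat.strong_induction_on with
  | _ n ih =>
  intro A X hA hAne hX hdisjXA hwit hn
  obtain ⟨C0, hC0, hC0A, hXC0⟩ := hwit
  have hdisj' := Set.disjoint_left.mp hdisjXA
  have hC0ne : C0.Nonempty := hC0.2.1
  by_cases hauto : Autonomous P A
  · -- then C0 = A
    have hint : (A ∩ (X ∪ C0)).Nonempty := by
      obtain ⟨c, hc⟩ := hC0ne
      exact ⟨c, hC0A hc, Or.inr hc⟩
    rcases auton_cases hauto hXC0 hint with hsub | hsub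
    · have hAC0 : A ⊆ C0 := by
        intro x hx
        rcases hsub hx with h1 | h1
        · exact absurd hx (hdisj' h1)
        · exact h1
      have heq : C0 = A := subset_antisymm hC0A hAC0
      refine ⟨{A}, ?_, Set.sUnion_singleton A, connected_single A, A, rfl, ?_⟩
      · rintro C rfl
        exact hauto
      · rw [← heq]; exact hXC0
    · exfalso
      obtain ⟨x, hx⟩ := hX.2.1
      exact hdisj' hx (hsub (Or.inl hx))
  · -- A not autonomous; C0 ⊂ A
    have hss : C0 ⊂ A := by
      refine ⟨hC0A, fun hcon => hauto ?_⟩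
      have : C0 = A := subset_antisymm hC0A hcon
      rwa [this] at hC0
    have hov : Overlap A (X ∪ C0) := by
      refine ⟨?_, ?_, ?_⟩
      · obtain ⟨c, hc⟩ := hC0ne
        exact ⟨c, hC0A hc, Or.inr hc⟩
      · intro hcon
        apply hss.not_subset
        intro x hx
        rcases hcon hx with h1 | h1
        · exact absurd hx (hdisj' h1)
        · exact h1
      · intro hcon
        obtain ⟨x, hx⟩ := hX.2.1
        exact hdisj' hx (hcon (Or.inl hx))
    have hdiffP : A \ C0 ∈ P := by
      have := (hP.2.2 A hA (X ∪ C0) hXC0 hov).2.2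
      have heq : A \ (X ∪ C0) = A \ C0 := by
        ext x
        simp only [Set.mem_diff, Set.mem_union, not_or]
        constructor
        · rintro ⟨h1, _, h3⟩; exact ⟨h1, h3⟩
        · rintro ⟨h1, h2⟩; exact ⟨h1, fun h => hdisj' h h1, h2⟩
      rwa [heq] at this
    have hdiffne : (A \ C0).Nonempty := Set.diff_nonempty.mpr hss.not_subset
    have hdisjC0 : Disjoint C0 (A \ C0) := Set.disjoint_sdiff_right
    have hunion : A \ C0 ∪ C0 = A := Set.diff_union_of_subset hC0A
    -- witness for the recursive call
    obtain ⟨C', hC', hC'sub, hC'C0⟩ :=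
      shrink hP hfin (mP P (A \ C0)) (A \ C0) C0 hdiffP hC0.1 hdiffne hC0ne
        Set.disjoint_sdiff_left (by rw [hunion]; exact hA) le_rfl
    have hm : mP P (A \ C0) < n := by
      refine lt_of_lt_of_le (mP_lt hfin hA ?_) hn
      refine ⟨Set.diff_subset, fun hcon => ?_⟩
      obtain ⟨c, hc⟩ := hC0ne
      exact (hcon (hC0A hc)).2 hc
    obtain ⟨F', hF'auto, hF'union, hF'conn, D', hD'F', hC0D'⟩ :=
      ih (mP P (A \ C0)) hm (A \ C0) C0 hdiffP hdiffne hC0 hdisjC0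
        ⟨C', hC', hC'sub, by rw [Set.union_comm]; exact hC'C0⟩ le_rfl
    have hD'sub : D' ⊆ A \ C0 := by
      rw [← hF'union]; exact Set.subset_sUnion_of_mem hD'F'
    have hC0notF' : C0 ∉ F' := by
      intro hcon
      obtain ⟨c, hc⟩ := hC0ne
      have : C0 ⊆ A \ C0 := by rw [← hF'union]; exact Set.subset_sUnion_of_mem hcon
      exact (this hc).2 hc
    have hC0neD' : C0 ≠ D' := by
      intro hcon
      rw [hcon] at hC0notF'
      exact hC0notF' hD'F'
    have hadjC0D' : Adjacent P C0 D' := by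
      refine ⟨Set.disjoint_left.mpr fun x hx hx' => (hD'sub hx').2 hx, hC0D'⟩
    refine ⟨insert C0 F', ?_, ?_, connected_insert hF'conn hD'F' hC0neD' hadjC0D',
      C0, Set.mem_insert _ _, hXC0⟩
    · rintro C (rfl | hC)
      · exact hC0
      · exact hF'auto C hC
    · rw [Set.sUnion_insert, hF'union, Set.union_diff_cancel hC0A]


/-- Forward direction: every nonempty member decomposes. -/
lemma decomp (hP : IsPatchwork P) (hfin : P.Finite) {A : Set Ω} (hA : A ∈ P)
    (hAne : A.Nonempty) :
    ∃ F : Set (Set Ω), (∀ C ∈ F, Autonomous P C) ∧ ⋃₀ F = A ∧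
      (adjGraph P F).Connected := by
  by_cases hauto : Autonomous P A
  · exact ⟨{A}, by rintro C rfl; exact hauto, Set.sUnion_singleton A, connected_single A⟩
  obtain ⟨B, hB, hovAB⟩ := exists_overlap hA hAne hauto
  have hA1 : A ∩ B ∈ P := (hP.2.2 A hA B hB hovAB).1
  have hA2 : A \ B ∈ P := (hP.2.2 A hA B hB hovAB).2.2
  have hA1ne : (A ∩ B).Nonempty := hovAB.1
  have hA2ne : (A \ B).Nonempty := Set.diff_nonempty.mpr hovAB.2.1
  have hdisj12 : Disjoint (A ∩ B) (A \ B) :=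
    Set.disjoint_left.mpr fun x hx hx' => hx'.2 hx.2
  have hunion12 : (A ∩ B) ∪ (A \ B) = A := Set.inter_union_diff A B
  have hAP' : (A ∩ B) ∪ (A \ B) ∈ P := by rw [hunion12]; exact hA
  obtain ⟨C₁, hC₁, hC₁sub, hC₁A2⟩ :=
    shrink hP hfin (mP P (A ∩ B)) (A ∩ B) (A \ B) hA1 hA2 hA1ne hA2ne hdisj12 hAP' le_rfl
  have hC₁ne : C₁.Nonempty := hC₁.2.1
  have hdisjC₁A2 : Disjoint C₁ (A \ B) := hdisj12.mono_left hC₁sub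
  obtain ⟨C₂, hC₂, hC₂sub, hC₂C₁⟩ :=
    shrink hP hfin (mP P (A \ B)) (A \ B) C₁ hA2 hC₁.1 hA2ne hC₁ne
      (hdisjC₁A2.symm) (by rw [Set.union_comm]; exact hC₁A2) le_rfl
  obtain ⟨F₂, hF₂auto, hF₂union, hF₂conn, D₂, hD₂F₂, hC₁D₂⟩ :=
    decomp_anchored hP hfin (mP P (A \ B)) (A \ B) C₁ hA2 hA2ne hC₁ hdisjC₁A2
      ⟨C₂, hC₂, hC₂sub, by rw [Set.union_comm]; exact hC₂C₁⟩ le_rfl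
  have hD₂auto : Autonomous P D₂ := hF₂auto D₂ hD₂F₂
  have hD₂sub : D₂ ⊆ A \ B := by
    rw [← hF₂union]; exact Set.subset_sUnion_of_mem hD₂F₂
  obtain ⟨F₁, hF₁auto, hF₁union, hF₁conn, D₁, hD₁F₁, hD₂D₁⟩ :=
    decomp_anchored hP hfin (mP P (A ∩ B)) (A ∩ B) D₂ hA1 hA1ne hD₂auto
      (hdisj12.symm.mono_left hD₂sub)
      ⟨C₁, hC₁, hC₁sub, by rw [Set.union_comm]; exact hC₁D₂⟩ le_rfl
  have hD₁sub : D₁ ⊆ A ∩ B := by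
    rw [← hF₁union]; exact Set.subset_sUnion_of_mem hD₁F₁
  have hdisjD : Disjoint D₁ D₂ := hdisj12.mono hD₁sub hD₂sub
  have hD₁ne : D₁.Nonempty := (hF₁auto D₁ hD₁F₁).2.1
  have hDne : D₁ ≠ D₂ := by
    intro hcon
    obtain ⟨x, hx⟩ := hD₁ne
    exact Set.disjoint_left.mp hdisjD hx (hcon ▸ hx)
  refine ⟨F₁ ∪ F₂, ?_, ?_, ?_⟩
  · rintro C (hC | hC)
    · exact hF₁auto C hC
    · exact hF₂auto C hC
  · rw [Set.sUnion_union, hF₁union, hF₂union, hunion12]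
  · exact connected_union hF₁conn hF₂conn hD₁F₁ hD₂F₂ hDne
      ⟨hdisjD, by rw [Set.union_comm]; exact hD₂D₁⟩

/-- Backward direction: the union of a connected family of members is a member. -/
lemma sUnion_mem (hP : IsPatchwork P) (hfin : P.Finite) {F : Set (Set Ω)}
    (hF : ∀ C ∈ F, Autonomous P C) (hconn : (adjGraph P F).Connected) :
    ⋃₀ F ∈ P := by
  obtain ⟨⟨C₀, hC₀⟩⟩ := hconn.nonempty
  set T : Set (Set (Set Ω)) := {S | S ⊆ F ∧ C₀ ∈ S ∧ ⋃₀ S ∈ P} with hT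
  have hFfin : F.Finite := hfin.subset (fun C hC => (hF C hC).1)
  have hTfin : T.Finite := hFfin.finite_subsets.subset (fun S hS => hS.1)
  have hTne : ({C₀} : Set (Set Ω)) ∈ T :=
    ⟨Set.singleton_subset_iff.mpr hC₀, rfl,
      by rw [Set.sUnion_singleton]; exact (hF C₀ hC₀).1⟩
  obtain ⟨S, hST, hmax⟩ := Set.Finite.exists_maximalFor id T hTfin ⟨_, hTne⟩
  obtain ⟨hSF, hC₀S, hSP⟩ := hST
  have hclaim : F ⊆ S := by
    by_contra hc
    obtain ⟨Cx, hCxF, hCxS⟩ := Set.not_subset.mp hc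
    obtain ⟨p⟩ := hconn.preconnected ⟨C₀, hC₀⟩ ⟨Cx, hCxF⟩
    obtain ⟨d, _, hdf, hds⟩ :=
      p.exists_boundary_dart {x : ↥F | (x : Set Ω) ∈ S} hC₀S hCxS
    have hadj := d.adj
    obtain ⟨hDCne, hDCdisj, hDCun⟩ := hadj
    set D : Set Ω := ↑d.fst with hDdef
    set C : Set Ω := ↑d.snd with hCdef
    have hDS : D ∈ S := hdf
    have hCS : C ∉ S := hds
    have hDX : D ⊆ ⋃₀ S := Set.subset_sUnion_of_mem hDS
    have hDne : D.Nonempty := (hF D (hSF hDS)).2.1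
    have hXC : ⋃₀ S ∪ C ∈ P := by
      by_cases h1 : ⋃₀ S ⊆ D ∪ C
      · have heq : ⋃₀ S ∪ C = D ∪ C := by
          apply subset_antisymm (Set.union_subset h1 Set.subset_union_right)
          exact Set.union_subset (hDX.trans Set.subset_union_left) Set.subset_union_right
        rw [heq]; exact hDCun
      by_cases h2 : D ∪ C ⊆ ⋃₀ S
      · have hCX : C ⊆ ⋃₀ S := Set.subset_union_right.trans h2
        rw [Set.union_eq_self_of_subset_right hCX]; exact hSP
      · have hint : (⋃₀ S ∩ (D ∪ C)).Nonempty := by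
          obtain ⟨x, hx⟩ := hDne
          exact ⟨x, hDX hx, Or.inl hx⟩
        have := (hP.2.2 _ hSP _ hDCun ⟨hint, h1, h2⟩).2.1
        have heq : ⋃₀ S ∪ (D ∪ C) = ⋃₀ S ∪ C := by
          rw [← Set.union_assoc, Set.union_eq_self_of_subset_right hDX]
        rwa [heq] at this
    have hS' : insert C S ∈ T := by
      refine ⟨Set.insert_subset d.snd.2 hSF, Set.mem_insert_of_mem _ hC₀S, ?_⟩
      rw [Set.sUnion_insert, Set.union_comm]
      exact hXC
    have heq := hmax hS' (Set.subset_insert _ _)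
    have heq' : S = insert C S := (Set.subset_insert _ _).antisymm heq
    exact hCS (heq' ▸ Set.mem_insert C S)
  have : S = F := subset_antisymm hSF hclaim
  rwa [this] at hSP

end Statement9Aux

theorem statement9 {Ω : Type*} (P : Set (Set Ω)) (hP : IsPatchwork P) (hfin : P.Finite)
    (A : Set Ω) (hne : A.Nonempty) :
    A ∈ P ↔ ∃ F : Set (Set Ω), (∀ C ∈ F, Autonomous P C) ∧ A = ⋃₀ F ∧
      (adjGraph P F).Connected := by
  constructor
  · intro hA
    obtain ⟨F, h1, h2, h3⟩ := Statement9Aux.decomp hP hfin hA hne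
    exact ⟨F, h1, h2.symm, h3⟩
  · rintro ⟨F, hF, hAF, hconn⟩
    rw [hAF]
    exact Statement9Aux.sUnion_mem hP hfin hF hconn
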